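/- Let F and G be endofunctors of a category 𝒞 and μ : F ⟶ G a natural transformation. Suppose the forgetful functor V : CoAlg^F ⥤ 𝒞 from F-coalgebras has a right adjoint Cof (with counit ε), and that CoAlg^F has equalizers. Then the pushforward functor μ_* : CoAlg^F ⥤ CoAlg^G has a right adjoint μ_¡, whose value at a G-coalgebra (C, χ) is the equalizer in CoAlg^F of the two morphisms Cof(χ) and f̃ : Cof(C) ⟶ Cof(G C), where f̃ is the adjunct under V ⊣ Cof of the composite f = μ_C ∘ F(ε_C) ∘ χ_{Cof C} : V(Cof C) ⟶ G C (with χ_{Cof C} : V(Cof C) ⟶ F(V(Cof C)) the structure map of the cofree F-coalgebra Cof C). -/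

import Mathlib

open CategoryTheory Limits

universe v u

namespace PaperStmt

variable {C : Type u} [Category.{v} C]

/-- The pushforward of an `F`-coalgebra along a natural transformation `μ : F ⟶ G`:
it sends `(V, χ)` to `(V, μ_V ∘ χ)` and is the identity on morphisms. -/
@[simps]
def pushforwardCoalg {F G : C ⥤ C} (μ : F ⟶ G) :
    Endofunctor.Coalgebra F ⥤ Endofunctor.Coalgebra G where
  obj V := ⟨V.V, V.str ≫ μ.app V.V⟩
  map {V W} g := { f := g.f, h := by dsimp; rw [Category.assoc, ← μ.naturality, g.h_assoc] }

section Aux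

variable {F G : C ⥤ C} (μ : F ⟶ G) (Cof : C ⥤ Endofunctor.Coalgebra F)
    (adj0 : Endofunctor.Coalgebra.forget F ⊣ Cof)

/-- The adjunct of `f = μ_C ∘ F(ε_C) ∘ χ_{Cof C}`. -/
def ftil (Co : Endofunctor.Coalgebra G) : Cof.obj Co.V ⟶ Cof.obj (G.obj Co.V) :=
  adj0.homEquiv (Cof.obj Co.V) (G.obj Co.V)
    ((Cof.obj Co.V).str ≫ F.map (adj0.counit.app Co.V) ≫ μ.app Co.V)

lemma ftil_f_counit (Co : Endofunctor.Coalgebra G) :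
    (ftil μ Cof adj0 Co).f ≫ adj0.counit.app (G.obj Co.V)
      = (Cof.obj Co.V).str ≫ F.map (adj0.counit.app Co.V) ≫ μ.app Co.V := by
  have := (adj0.homEquiv (Cof.obj Co.V) (G.obj Co.V)).symm_apply_apply
    ((Cof.obj Co.V).str ≫ F.map (adj0.counit.app Co.V) ≫ μ.app Co.V)
  rw [Adjunction.homEquiv_counit] at this
  simp only [Endofunctor.Coalgebra.forget_map] at this
  exact this

lemma key {A : Endofunctor.Coalgebra F} {Co : Endofunctor.Coalgebra G}
    (h : A ⟶ Cof.obj Co.V) :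
    h ≫ Cof.map Co.str = h ≫ ftil μ Cof adj0 Co ↔
      (A.str ≫ μ.app A.V) ≫ G.map (h.f ≫ adj0.counit.app Co.V)
        = (h.f ≫ adj0.counit.app Co.V) ≫ Co.str := by
  rw [← (adj0.homEquiv A (G.obj Co.V)).symm.injective.eq_iff]
  have e1 : (adj0.homEquiv A (G.obj Co.V)).symm (h ≫ Cof.map Co.str)
      = (h.f ≫ adj0.counit.app Co.V) ≫ Co.str := by
    rw [Adjunction.homEquiv_counit]
    have hnat := adj0.counit.naturality Co.str
    simp only [Functor.comp_map, Endofunctor.Coalgebra.forget_map, Functor.id_map] at hnat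
    simp only [Endofunctor.Coalgebra.forget_map, Endofunctor.Coalgebra.comp_f, Category.assoc]
    exact (Category.assoc _ _ _).trans ((congrArg (fun x => h.f ≫ x) hnat).trans (Category.assoc _ _ _).symm)
  have e2 : (adj0.homEquiv A (G.obj Co.V)).symm (h ≫ ftil μ Cof adj0 Co)
      = (A.str ≫ μ.app A.V) ≫ G.map (h.f ≫ adj0.counit.app Co.V) := by
    rw [Adjunction.homEquiv_counit]
    simp only [Endofunctor.Coalgebra.forget_map, Endofunctor.Coalgebra.comp_f, Category.assoc]
    refine Eq.trans (b := h.f ≫ ((Cof.obj Co.V).str ≫ F.map (adj0.counit.app Co.V) ≫ μ.app Co.V))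
      ((Category.assoc _ _ _).trans (congrArg (fun x => h.f ≫ x) (ftil_f_counit μ Cof adj0 Co))) ?_
    rw [← Category.assoc, ← h.h]
    simp only [Category.assoc, Functor.map_comp]
    exact congrArg (fun x => A.str ≫ x) ((F.map_comp_assoc _ _ _).symm.trans (μ.naturality _))
  rw [e1, e2]
  exact eq_comm

end Aux

/-- If the forgetful functor from `F`-coalgebras has a right adjoint `Cof`
and `CoAlg^F` has equalizers, then the pushforward functor `μ_* : CoAlg^F ⥤ CoAlg^G` has a
right adjoint `μ_¡` whose value at `(C, χ)` is the equalizer of `Cof(χ)` and `f̃`, the adjunct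
of `f = μ_C ∘ F(ε_C) ∘ χ_{Cof C}`. -/
theorem stmt2 {F G : C ⥤ C} (μ : F ⟶ G)
    (Cof : C ⥤ Endofunctor.Coalgebra F)
    (adj0 : Endofunctor.Coalgebra.forget F ⊣ Cof)
    [HasEqualizers (Endofunctor.Coalgebra F)] :
    ∃ (R : Endofunctor.Coalgebra G ⥤ Endofunctor.Coalgebra F)
      (_ : pushforwardCoalg μ ⊣ R),
      ∀ Co : Endofunctor.Coalgebra G,
        Nonempty (R.obj Co ≅
          equalizer (Cof.map Co.str)
            (adj0.homEquiv (Cof.obj Co.V) (G.obj Co.V)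
              ((Cof.obj Co.V).str ≫ F.map (adj0.counit.app Co.V) ≫ μ.app Co.V))) := by
  let Eobj : Endofunctor.Coalgebra G → Endofunctor.Coalgebra F :=
    fun Co => equalizer (Cof.map Co.str) (ftil μ Cof adj0 Co)
  have heq : ∀ (A : Endofunctor.Coalgebra F) (Co : Endofunctor.Coalgebra G)
      (g : (pushforwardCoalg μ).obj A ⟶ Co),
      adj0.homEquiv A Co.V g.f ≫ Cof.map Co.str
        = adj0.homEquiv A Co.V g.f ≫ ftil μ Cof adj0 Co := by
    intro A Co g
    rw [key]
    have hsymm : (adj0.homEquiv A Co.V g.f).f ≫ adj0.counit.app Co.V = g.f := by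
      have := (adj0.homEquiv A Co.V).symm_apply_apply g.f
      rw [Adjunction.homEquiv_counit] at this
      simp only [Endofunctor.Coalgebra.forget_map] at this
      exact this
    rw [hsymm]
    exact g.h
  let e : ∀ (A : Endofunctor.Coalgebra F) (Co : Endofunctor.Coalgebra G),
      ((pushforwardCoalg μ).obj A ⟶ Co) ≃ (A ⟶ Eobj Co) := fun A Co =>
    { toFun := fun g => equalizer.lift (adj0.homEquiv A Co.V g.f) (heq A Co g)
      invFun := fun k =>
        { f := (adj0.homEquiv A Co.V).symm (k ≫ equalizer.ι _ _)
          h := by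
            have hk : (k ≫ equalizer.ι _ _) ≫ Cof.map Co.str
                = (k ≫ equalizer.ι _ _) ≫ ftil μ Cof adj0 Co := by
              simp [Category.assoc, equalizer.condition]
            rw [key] at hk
            rw [Adjunction.homEquiv_counit]
            exact hk }
      left_inv := fun g => by
        apply Endofunctor.Coalgebra.Hom.ext
        dsimp only
        rw [equalizer.lift_ι]
        exact Equiv.symm_apply_apply _ _
      right_inv := fun k => by
        apply equalizer.hom_ext
        rw [equalizer.lift_ι]
        exact Equiv.apply_symm_apply _ _ }
  have he : ∀ (X' X : Endofunctor.Coalgebra F) (Y : Endofunctor.Coalgebra G)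
      (f : X' ⟶ X) (g : (pushforwardCoalg μ).obj X ⟶ Y),
      e X' Y ((pushforwardCoalg μ).map f ≫ g) = f ≫ e X Y g := by
    intro X' X Y f g
    apply equalizer.hom_ext
    simp only [e, equalizer.lift_ι, Category.assoc, equalizer.lift_ι]
    have := adj0.homEquiv_naturality_left f g.f
    simp only [Endofunctor.Coalgebra.forget_map] at this
    simp
    exact this
  exact ⟨Adjunction.rightAdjointOfEquiv e he, Adjunction.adjunctionOfEquivRight e he,
    fun Co => ⟨Iso.refl _⟩⟩

end PaperStmt
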